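/- arXiv:1711.03763 — 2 statements merged into one kernel-verified Lean document; each statement's English description precedes it below -/
import Mathlib

section
/- For ψ(x) = |x|^{-(n-p)/p} with 1 ≤ p < n, the weak quotient ‖ψ‖_{p*,∞} / ‖∇ψ‖_{p,∞} equals exactly (p/(n-p)) ω_n^{-1/n}: indeed |∇ψ(x)| = ((n-p)/p)|x|^{-n/p}, ‖ψ‖_{p*,∞} = ω_n^{1/p*}, and ‖∇ψ‖_{p,∞} = ω_n^{1/p} (n-p)/p, so ψ attains equality in the Sobolev–Marcinkiewicz inequality ‖v‖_{p*,∞} ≤ (p/(n-p)) ω_n^{-1/n} ‖∇v‖_{p,∞}. -/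
open MeasureTheory Set Filter Topology ENNReal

/-- Distribution function of `|u|` with respect to Lebesgue measure on `ℝ^n`. -/
noncomputable def distrib {n : ℕ} (u : EuclideanSpace ℝ (Fin n) → ℝ) (t : ℝ) : ℝ≥0∞ :=
  volume {x | t < |u x|}

/-- Decreasing rearrangement `u*(s) = sup {t > 0 : μ_u(t) > s}`. -/
noncomputable def rearr {n : ℕ} (u : EuclideanSpace ℝ (Fin n) → ℝ) (s : ℝ) : ℝ :=
  sSup {t : ℝ | 0 < t ∧ ENNReal.ofReal s < distrib u t}

/-- The constant `ω_n` such that the Lebesgue measure of `{|x| < r}` equals `ω_n r^n`. -/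
noncomputable def omegaN (n : ℕ) : ℝ :=
  (volume (Metric.ball (0 : EuclideanSpace ℝ (Fin n)) 1)).toReal

lemma omegaN_pos {n : ℕ} (hn : 0 < n) : 0 < omegaN n := by
  haveI : Nonempty (Fin n) := ⟨⟨0, hn⟩⟩
  exact ENNReal.toReal_pos (Metric.measure_ball_pos volume 0 one_pos).ne' measure_ball_lt_top.ne

lemma distrib_eq {n : ℕ} (hn : 0 < n) {c b : ℝ} (hc : 0 < c) (hb : 0 < b)
    {u : EuclideanSpace ℝ (Fin n) → ℝ}
    (hu : ∀ x, x ≠ 0 → u x = c * ‖x‖ ^ (-b)) (hu0 : u 0 = 0)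
    {t : ℝ} (ht : 0 < t) :
    distrib u t = ENNReal.ofReal (((c / t) ^ b⁻¹) ^ n * omegaN n) := by
  haveI : Nonempty (Fin n) := ⟨⟨0, hn⟩⟩
  haveI : Nontrivial (EuclideanSpace ℝ (Fin n)) := inferInstance
  set R : ℝ := (c / t) ^ b⁻¹ with hR
  have hct : 0 < c / t := div_pos hc ht
  have hRpos : 0 < R := Real.rpow_pos_of_pos hct _
  have hset : {x : EuclideanSpace ℝ (Fin n) | t < |u x|} = Metric.ball 0 R \ {0} := by
    ext x
    rcases eq_or_ne x 0 with rfl | hx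
    · simp [hu0, ht.not_gt, not_lt.2 ht.le]
    · have hxn : 0 < ‖x‖ := norm_pos_iff.2 hx
      have habs : |u x| = c * ‖x‖ ^ (-b) := by
        rw [hu x hx, abs_of_nonneg]
        positivity
      simp only [Set.mem_setOf_eq, habs, Set.mem_diff, Metric.mem_ball, dist_zero_right,
        Set.mem_singleton_iff, hx, not_false_iff, and_true]
      rw [Real.rpow_neg (norm_nonneg x), ← div_eq_mul_inv,
        lt_div_iff₀ (Real.rpow_pos_of_pos hxn b), hR,
        Real.lt_rpow_inv_iff_of_pos (norm_nonneg x) hct.le hb, lt_div_iff₀ ht, mul_comm]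
  rw [distrib, hset, measure_diff_null (measure_singleton 0),
    Measure.addHaar_ball volume 0 hRpos.le, omegaN]
  rw [ENNReal.ofReal_mul (by positivity), ENNReal.ofReal_toReal measure_ball_lt_top.ne]
  congr 2
  simp [finrank_euclideanSpace]

lemma rearr_eq {n : ℕ} (hn : 0 < n) {c b : ℝ} (hc : 0 < c) (hb : 0 < b)
    {u : EuclideanSpace ℝ (Fin n) → ℝ}
    (hu : ∀ x, x ≠ 0 → u x = c * ‖x‖ ^ (-b)) (hu0 : u 0 = 0)
    {s : ℝ} (hs : 0 < s) :
    rearr u s = c * (omegaN n / s) ^ (b / n) := by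
  have hω := omegaN_pos hn
  have hn' : (0:ℝ) < n := by exact_mod_cast hn
  set ω := omegaN n with hWd
  set T := c * (ω / s) ^ (b / n) with hT
  have hbn : 0 < b / n := div_pos hb hn'
  have hTpos : 0 < T := by positivity
  have hset : {t : ℝ | 0 < t ∧ ENNReal.ofReal s < distrib u t} = Set.Ioo 0 T := by
    ext t
    simp only [Set.mem_setOf_eq, Set.mem_Ioo, and_congr_right_iff]
    intro ht
    have hct : 0 < c / t := div_pos hc ht
    rw [distrib_eq hn hc hb hu hu0 ht,
      ENNReal.ofReal_lt_ofReal_iff (by positivity),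
      ← Real.rpow_natCast ((c / t) ^ b⁻¹) n, ← Real.rpow_mul hct.le,
      (by field_simp : b⁻¹ * (n:ℝ) = (b / n)⁻¹),
      ← div_lt_iff₀ hω,
      Real.lt_rpow_inv_iff_of_pos (by positivity) hct.le hbn,
      lt_div_iff₀ ht]
    have hY : (ω / s) ^ (b / n) = ((s / ω) ^ (b / n))⁻¹ := by
      rw [← Real.inv_rpow (by positivity), inv_div]
    rw [hT, hY, ← div_eq_mul_inv, lt_div_iff₀ (by positivity), mul_comm]
  rw [rearr, hset, csSup_Ioo hTpos]

lemma sSup_weak {n : ℕ} (hn : 0 < n) {c b e : ℝ} (hc : 0 < c) (hb : 0 < b)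
    (he : e = b / n)
    {u : EuclideanSpace ℝ (Fin n) → ℝ}
    (hu : ∀ x, x ≠ 0 → u x = c * ‖x‖ ^ (-b)) (hu0 : u 0 = 0) :
    sSup ((fun t : ℝ => t ^ e * rearr u t) '' Set.Ioi 0) = omegaN n ^ e * c := by
  have hω := omegaN_pos hn
  have key : ∀ t : ℝ, 0 < t → t ^ e * rearr u t = omegaN n ^ e * c := by
    intro t ht
    rw [rearr_eq hn hc hb hu hu0 ht, ← he,
      Real.div_rpow hω.le ht.le]
    have h1 : t ^ e ≠ 0 := (Real.rpow_pos_of_pos ht e).ne'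
    field_simp
  have himg : (fun t : ℝ => t ^ e * rearr u t) '' Set.Ioi 0 = {omegaN n ^ e * c} := by
    ext y
    constructor
    · rintro ⟨t, ht, rfl⟩
      simpa using key t ht
    · intro hy
      rw [Set.mem_singleton_iff] at hy
      exact ⟨1, by norm_num, by simp only []; rw [key 1 one_pos, hy]⟩
  rw [himg, csSup_singleton]

lemma fderiv_psi {n : ℕ} {a : ℝ} (ha : 0 < a)
    {ψ : EuclideanSpace ℝ (Fin n) → ℝ} (hψ : ∀ x, ψ x = ‖x‖ ^ (-a))
    {x : EuclideanSpace ℝ (Fin n)} (hx : x ≠ 0) :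
    ‖fderiv ℝ ψ x‖ = a * ‖x‖ ^ (-a - 1) := by
  haveI : Nontrivial (EuclideanSpace ℝ (Fin n)) := ⟨x, 0, hx⟩
  have hxn : ‖x‖ ≠ 0 := norm_ne_zero_iff.2 hx
  have hdn : DifferentiableAt ℝ (fun y : EuclideanSpace ℝ (Fin n) => ‖y‖) x :=
    ((contDiffAt_norm ℝ (n := 1) hx).differentiableAt one_ne_zero)
  have hr : HasDerivAt (fun r : ℝ => r ^ (-a)) ((-a) * ‖x‖ ^ (-a - 1)) ‖x‖ :=
    Real.hasDerivAt_rpow_const (Or.inl hxn)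
  have hcomp : HasFDerivAt ψ
      (((-a) * ‖x‖ ^ (-a - 1)) • fderiv ℝ (fun y : EuclideanSpace ℝ (Fin n) => ‖y‖) x) x := by
    have h := hr.comp_hasFDerivAt x hdn.hasFDerivAt
    have hψe : ψ = fun y : EuclideanSpace ℝ (Fin n) => ‖y‖ ^ (-a) := funext hψ
    rw [hψe]
    exact h
  rw [hcomp.fderiv, norm_smul, norm_fderiv_norm hdn, mul_one, Real.norm_eq_abs, abs_mul,
    abs_neg, abs_of_pos ha, abs_of_pos (Real.rpow_pos_of_pos (hxn.lt_of_le' (norm_nonneg x)) _)]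

lemma fderiv_psi_zero {n : ℕ} (hn : 0 < n) {a : ℝ} (ha : 0 < a)
    {ψ : EuclideanSpace ℝ (Fin n) → ℝ} (hψ : ∀ x, ψ x = ‖x‖ ^ (-a)) :
    fderiv ℝ ψ 0 = 0 := by
  apply fderiv_zero_of_not_differentiableAt
  intro h
  have hc : ContinuousAt ψ 0 := h.continuousAt
  have h0 : ψ 0 = 0 := by rw [hψ]; simp [Real.zero_rpow (by linarith : -a ≠ 0)]
  have hev : ∀ᶠ x in 𝓝 (0 : EuclideanSpace ℝ (Fin n)), ψ x < 1 := by
    have ht := hc.tendsto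
    rw [h0] at ht
    exact ht.eventually_lt_const one_pos
  rw [Metric.eventually_nhds_iff] at hev
  obtain ⟨ε, hε, hball⟩ := hev
  haveI : Nonempty (Fin n) := ⟨⟨0, hn⟩⟩
  obtain ⟨v, hv⟩ := exists_ne (0 : EuclideanSpace ℝ (Fin n))
  have hvn : 0 < ‖v‖ := norm_pos_iff.2 hv
  set r := min ε 1 / 2 with hr
  have hrpos : 0 < r := by
    have := lt_min hε one_pos
    positivity
  set y := (r / ‖v‖) • v with hyd
  have hy : ‖y‖ = r := by
    rw [hyd, norm_smul, Real.norm_eq_abs, abs_of_pos (div_pos hrpos hvn),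
      div_mul_cancel₀ _ hvn.ne']
  have hrε : r < ε := by
    have h1 : min ε 1 ≤ ε := min_le_left _ _
    have : r < min ε 1 := by rw [hr]; linarith [lt_min hε one_pos]
    linarith
  have h1 : ψ y < 1 := by
    apply hball
    rw [dist_zero_right, hy]
    exact hrε
  have h2 : (1:ℝ) ≤ ψ y := by
    rw [hψ]
    apply Real.one_le_rpow_of_pos_of_le_one_of_nonpos
    · rw [hy]; exact hrpos
    · rw [hy, hr]
      have := min_le_right ε 1
      linarith
    · linarith
  linarith

/-- `ψ(x) = |x|^{-(n-p)/p}` attains equality in the Sobolev–Marcinkiewicz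
inequality: `|∇ψ(x)| = ((n-p)/p)|x|^{-n/p}`, `‖ψ‖_{p*,∞} = ω_n^{1/p*}`,
`‖∇ψ‖_{p,∞} = ω_n^{1/p}(n-p)/p`, hence `‖ψ‖_{p*,∞} = (p/(n-p)) ω_n^{-1/n} ‖∇ψ‖_{p,∞}`. -/
theorem psi_extremal {n : ℕ} (p : ℝ) (hp : 1 ≤ p) (hpn : p < n)
    (ps : ℝ) (hps : ps = n * p / (n - p))
    (ψ : EuclideanSpace ℝ (Fin n) → ℝ)
    (hψ : ∀ x, ψ x = ‖x‖ ^ (-((n:ℝ) - p) / p)) :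
    (∀ x : EuclideanSpace ℝ (Fin n), x ≠ 0 →
        ‖fderiv ℝ ψ x‖ = (((n:ℝ) - p) / p) * ‖x‖ ^ (-(n:ℝ) / p)) ∧
    sSup ((fun t : ℝ => t ^ (1/ps) * rearr ψ t) '' Set.Ioi 0) = omegaN n ^ (1/ps) ∧
    sSup ((fun t : ℝ => t ^ (1/p) * rearr (fun x => ‖fderiv ℝ ψ x‖) t) '' Set.Ioi 0)
      = omegaN n ^ (1/p) * (((n:ℝ) - p) / p) ∧
    sSup ((fun t : ℝ => t ^ (1/ps) * rearr ψ t) '' Set.Ioi 0)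
      = (p / ((n:ℝ) - p)) * omegaN n ^ (-(1:ℝ)/(n:ℝ)) *
        sSup ((fun t : ℝ => t ^ (1/p) * rearr (fun x => ‖fderiv ℝ ψ x‖) t) '' Set.Ioi 0) := by
  have hp0 : (0:ℝ) < p := lt_of_lt_of_le one_pos hp
  have hn1 : (1:ℝ) < n := lt_of_le_of_lt hp hpn
  have hn : 0 < n := by exact_mod_cast lt_trans one_pos hn1
  have hn' : (0:ℝ) < n := by exact_mod_cast hn
  have hnp : (0:ℝ) < (n:ℝ) - p := by linarith
  have ha : 0 < ((n:ℝ) - p) / p := div_pos hnp hp0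
  have hψ' : ∀ x, ψ x = ‖x‖ ^ (-(((n:ℝ) - p) / p)) := by
    intro x; rw [hψ x, neg_div]
  have part1 : ∀ x : EuclideanSpace ℝ (Fin n), x ≠ 0 →
      ‖fderiv ℝ ψ x‖ = (((n:ℝ) - p) / p) * ‖x‖ ^ (-(n:ℝ) / p) := by
    intro x hx
    rw [fderiv_psi ha hψ' hx]
    congr 1
    field_simp
    congr 1
    ring
  have hu0ψ : ψ 0 = 0 := by
    rw [hψ' 0, norm_zero]
    exact Real.zero_rpow (neg_lt_zero.mpr ha).ne
  have part2 : sSup ((fun t : ℝ => t ^ (1/ps) * rearr ψ t) '' Set.Ioi 0)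
      = omegaN n ^ (1/ps) := by
    have h := sSup_weak hn (c := 1) (b := ((n:ℝ) - p) / p) (e := 1/ps) one_pos ha
      (by rw [hps, one_div_div, div_div, mul_comm])
      (fun x _ => by rw [hψ' x, one_mul]) hu0ψ
    rw [h, mul_one]
  have hg0 : ‖fderiv ℝ ψ (0 : EuclideanSpace ℝ (Fin n))‖ = 0 := by
    rw [fderiv_psi_zero hn ha hψ', norm_zero]
  have part3 : sSup ((fun t : ℝ => t ^ (1/p) * rearr (fun x => ‖fderiv ℝ ψ x‖) t) '' Set.Ioi 0)
      = omegaN n ^ (1/p) * (((n:ℝ) - p) / p) := by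
    refine sSup_weak hn (c := ((n:ℝ) - p) / p) (b := (n:ℝ)/p) (e := 1/p) ha
      (div_pos hn' hp0) (by field_simp) (fun x hx => ?_) hg0
    rw [part1 x hx, neg_div]
  refine ⟨part1, part2, part3, ?_⟩
  rw [part2, part3]
  have hω := omegaN_pos hn
  have h1 : (p / ((n:ℝ) - p)) * (((n:ℝ) - p) / p) = 1 := by field_simp
  have h2 : omegaN n ^ (-(1:ℝ)/(n:ℝ)) * omegaN n ^ (1/p) = omegaN n ^ (1/ps) := by
    rw [← Real.rpow_add hω]
    congr 1
    rw [hps, one_div_div]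
    field_simp
    ring
  calc omegaN n ^ (1/ps) = (p / ((n:ℝ) - p)) * (((n:ℝ) - p) / p) *
        (omegaN n ^ (-(1:ℝ)/(n:ℝ)) * omegaN n ^ (1/p)) := by rw [h1, h2, one_mul]
    _ = p / ((n:ℝ) - p) * omegaN n ^ (-(1:ℝ)/(n:ℝ)) * (omegaN n ^ (1/p) * (((n:ℝ) - p) / p)) := by
        ring
end

section
/- Let 1 < p < n and let u : (0,1] → [0,∞) be Lipschitz, nonincreasing, with u(1) = 0 and ∫₀^1 |u'(t)|^p t^{n-1} dt < ∞. With v(r) = ∫_r^1 ρ^{-n/p} ∫_ρ^1 |u'(t)|^p t^{n-1} dt dρ, one has ∫₀^1 u(ρ)^p ρ^{n-p-1} dρ ≤ (p/(n-p))^{p-1} sup_{0<r<1} r^{(n-p)/p} v(r). -/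
open MeasureTheory Set Filter Topology

private lemma avg_tendsto {f : ℝ → ℝ} (hf : Continuous f) (c : ℝ) :
    Tendsto (fun k : ℕ => (∫ x in (c - ((k:ℝ)+1)⁻¹)..c, f x) * ((k:ℝ)+1)) atTop (𝓝 (f c)) := by
  have hG : HasDerivAt (fun y => ∫ x in y..c, f x) (-f c) c :=
    intervalIntegral.integral_hasDerivAt_left (hf.intervalIntegrable _ _)
      (hf.stronglyMeasurable.stronglyMeasurableAtFilter) hf.continuousAt
  have hslope := hasDerivAt_iff_tendsto_slope.mp hG
  have hpos : ∀ k : ℕ, (0:ℝ) < ((k:ℝ)+1)⁻¹ := fun k => by positivity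
  have hseq : Tendsto (fun k : ℕ => c - ((k:ℝ)+1)⁻¹) atTop (𝓝[≠] c) := by
    apply tendsto_nhdsWithin_of_tendsto_nhds_of_eventually_within
    · have h1 : Tendsto (fun k : ℕ => ((k:ℝ)+1)⁻¹) atTop (𝓝 0) := by
        simpa using tendsto_one_div_add_atTop_nhds_zero_nat (𝕜 := ℝ)
      simpa using (tendsto_const_nhds (x := c)).sub h1
    · exact Eventually.of_forall fun k => by
        simp only [mem_compl_iff, mem_singleton_iff]
        exact fun h => absurd (sub_eq_self.mp h) (ne_of_gt (hpos k))
  have h2 := (hslope.comp hseq).neg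
  rw [neg_neg] at h2
  refine h2.congr fun k => ?_
  simp only [Function.comp_apply, slope_def_field, intervalIntegral.integral_same, sub_zero]
  rw [show c - ((k:ℝ)+1)⁻¹ - c = -((k:ℝ)+1)⁻¹ by ring, div_neg, neg_neg, div_inv_eq_mul]

private lemma ftc_lip {f g : ℝ → ℝ} {K : NNReal} (hf : LipschitzWith K f) {a b : ℝ} (hab : a ≤ b)
    (hg : ∀ᵐ t ∂(volume : Measure ℝ), t ∈ Set.Ioo a b → HasDerivAt f (g t) t) :
    (f b - f a = ∫ t in Set.Ioc a b, g t) ∧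
      AEStronglyMeasurable g (volume.restrict (Set.Ioc a b)) := by
  have hc : Continuous f := hf.continuous
  set F : ℕ → ℝ → ℝ := fun k x => (f x - f (x - ((k:ℝ)+1)⁻¹)) * ((k:ℝ)+1) with hF
  have hpos : ∀ k : ℕ, (0:ℝ) < ((k:ℝ)+1)⁻¹ := fun k => by positivity
  have hFcont : ∀ k, Continuous (F k) := fun k =>
    ((hc.sub (hc.comp (continuous_id.sub continuous_const))).mul continuous_const)
  -- integral identity
  have key : ∀ k, ∫ x in Set.Ioc a b, F k x =
      (∫ x in (b - ((k:ℝ)+1)⁻¹)..b, f x) * ((k:ℝ)+1)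
        - (∫ x in (a - ((k:ℝ)+1)⁻¹)..a, f x) * ((k:ℝ)+1) := by
    intro k
    have hIoc : ∫ x in Set.Ioc a b, F k x = ∫ x in a..b, F k x :=
      (intervalIntegral.integral_of_le hab).symm
    have hsub : ∫ x in a..b, F k x
        = ((∫ x in a..b, f x) - ∫ x in a..b, f (x - ((k:ℝ)+1)⁻¹)) * ((k:ℝ)+1) := by
      simp only [hF]
      rw [intervalIntegral.integral_mul_const, intervalIntegral.integral_sub
        (hc.intervalIntegrable _ _) ((show Continuous fun x : ℝ => f (x - ((k:ℝ)+1)⁻¹) by fun_prop).intervalIntegrable _ _)]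
    have hcomp : ∫ x in a..b, f (x - ((k:ℝ)+1)⁻¹)
        = ∫ x in (a - ((k:ℝ)+1)⁻¹)..(b - ((k:ℝ)+1)⁻¹), f x :=
      intervalIntegral.integral_comp_sub_right f _
    have e1 : (∫ x in (a - ((k:ℝ)+1)⁻¹)..a, f x) + (∫ x in a..b, f x)
        = ∫ x in (a - ((k:ℝ)+1)⁻¹)..b, f x :=
      intervalIntegral.integral_add_adjacent_intervals (hc.intervalIntegrable _ _)
        (hc.intervalIntegrable _ _)
    have e2 : (∫ x in (a - ((k:ℝ)+1)⁻¹)..(b - ((k:ℝ)+1)⁻¹), f x)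
        + (∫ x in (b - ((k:ℝ)+1)⁻¹)..b, f x) = ∫ x in (a - ((k:ℝ)+1)⁻¹)..b, f x :=
      intervalIntegral.integral_add_adjacent_intervals (hc.intervalIntegrable _ _)
        (hc.intervalIntegrable _ _)
    have e3 : (∫ x in a..b, f x) - (∫ x in (a - ((k:ℝ)+1)⁻¹)..(b - ((k:ℝ)+1)⁻¹), f x)
        = (∫ x in (b - ((k:ℝ)+1)⁻¹)..b, f x) - (∫ x in (a - ((k:ℝ)+1)⁻¹)..a, f x) := by
      linarith [e1, e2]
    rw [hIoc, hsub, hcomp, e3, sub_mul]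
  -- dominated convergence
  have hmeasF : ∀ k, AEStronglyMeasurable (F k) (volume.restrict (Set.Ioc a b)) := fun k =>
    (hFcont k).aestronglyMeasurable.restrict
  have hbound : ∀ k, ∀ᵐ x ∂(volume.restrict (Set.Ioc a b)), ‖F k x‖ ≤ (K:ℝ) := by
    intro k
    refine Eventually.of_forall fun x => ?_
    have hd := hf.dist_le_mul x (x - ((k:ℝ)+1)⁻¹)
    rw [Real.dist_eq, Real.dist_eq, show x - (x - ((k:ℝ)+1)⁻¹) = ((k:ℝ)+1)⁻¹ by ring,
      abs_of_pos (hpos k)] at hd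
    have : ‖F k x‖ = |f x - f (x - ((k:ℝ)+1)⁻¹)| * ((k:ℝ)+1) := by
      rw [hF]; simp [abs_mul, abs_of_pos (show (0:ℝ) < (k:ℝ)+1 by positivity)]
    rw [this]
    calc |f x - f (x - ((k:ℝ)+1)⁻¹)| * ((k:ℝ)+1) ≤ ((K:ℝ) * ((k:ℝ)+1)⁻¹) * ((k:ℝ)+1) :=
          mul_le_mul_of_nonneg_right hd (by positivity)
      _ = (K:ℝ) := by field_simp
  have hlim : ∀ᵐ x ∂(volume.restrict (Set.Ioc a b)), Tendsto (fun k => F k x) atTop (𝓝 (g x)) := by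
    have hne : ∀ᵐ x ∂(volume : Measure ℝ), x ≠ b := by
      have : {x : ℝ | ¬ x ≠ b} = {b} := by ext x; simp
      rw [ae_iff, this]; exact measure_singleton b
    filter_upwards [ae_restrict_mem measurableSet_Ioc, ae_restrict_of_ae hg,
      ae_restrict_of_ae hne] with x hx hgx hxb
    have hxo : x ∈ Set.Ioo a b := ⟨hx.1, lt_of_le_of_ne hx.2 hxb⟩
    have hd := hasDerivAt_iff_tendsto_slope.mp (hgx hxo)
    have hseq : Tendsto (fun k : ℕ => x - ((k:ℝ)+1)⁻¹) atTop (𝓝[≠] x) := by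
      apply tendsto_nhdsWithin_of_tendsto_nhds_of_eventually_within
      · have h1 : Tendsto (fun k : ℕ => ((k:ℝ)+1)⁻¹) atTop (𝓝 0) := by
          simpa using tendsto_one_div_add_atTop_nhds_zero_nat (𝕜 := ℝ)
        simpa using (tendsto_const_nhds (x := x)).sub h1
      · exact Eventually.of_forall fun k => by
          simp only [mem_compl_iff, mem_singleton_iff]
          exact fun h => absurd (sub_eq_self.mp h) (ne_of_gt (hpos k))
    refine (hd.comp hseq).congr fun k => ?_
    simp only [Function.comp_apply, slope_def_field]
    rw [show x - ((k:ℝ)+1)⁻¹ - x = -((k:ℝ)+1)⁻¹ by ring, div_neg, div_inv_eq_mul, hF,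
      ← neg_mul, neg_sub]
  have hDCT := tendsto_integral_of_dominated_convergence (fun _ => (K:ℝ)) hmeasF
    (integrable_const _) hbound hlim
  constructor
  · have h2 : Tendsto (fun k => ∫ x in Set.Ioc a b, F k x) atTop (𝓝 (f b - f a)) := by
      have := (avg_tendsto hc b).sub (avg_tendsto hc a)
      exact this.congr fun k => (key k).symm
    exact (tendsto_nhds_unique h2 hDCT)
  · exact aestronglyMeasurable_of_tendsto_ae atTop hmeasF hlim

/-- the key lower bound:
`∫₀^1 u(ρ)^p ρ^{n-p-1} dρ ≤ (p/(n-p))^{p-1} sup_{0<r<1} r^{(n-p)/p} v(r)`. -/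
theorem hardy_lower_bound (n p : ℝ) (hp : 1 < p) (hpn : p < n)
    (u u' : ℝ → ℝ) (K : NNReal) (hlip : LipschitzOnWith K u (Set.Ioc 0 1))
    (hmono : AntitoneOn u (Set.Ioc 0 1))
    (hnonneg : ∀ t ∈ Set.Ioc (0:ℝ) 1, 0 ≤ u t)
    (hu1 : u 1 = 0)
    (hderiv : ∀ᵐ t ∂volume, t ∈ Set.Ioc (0:ℝ) 1 → HasDerivAt u (u' t) t)
    (hint : IntegrableOn (fun t => |u' t| ^ p * t ^ (n - 1)) (Set.Ioc 0 1))
    (v : ℝ → ℝ)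
    (hv : ∀ r, v r = ∫ ρ in Set.Ioc r 1,
        ρ ^ (-(n / p)) * ∫ t in Set.Ioc ρ 1, |u' t| ^ p * t ^ (n - 1)) :
    ∫ ρ in Set.Ioc (0:ℝ) 1, u ρ ^ p * ρ ^ (n - p - 1)
      ≤ (p / (n - p)) ^ (p - 1) *
        sSup ((fun r => r ^ ((n - p) / p) * v r) '' Set.Ioo 0 1) := by
  have hp0 : (0:ℝ) < p := lt_trans one_pos hp
  have hn0 : (0:ℝ) < n := hp0.trans hpn
  have hnp : (0:ℝ) < n - p := sub_pos.mpr hpn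
  have hp1 : (0:ℝ) < p - 1 := sub_pos.mpr hp
  set α : ℝ := (n - p) / p with hα
  have hα0 : 0 < α := div_pos hnp hp0
  set c1 : ℝ := p / (n - p) with hc1
  have hc10 : 0 < c1 := div_pos hp0 hnp
  have hc1α : c1 = α⁻¹ := by rw [hc1, hα, inv_div]
  set C' : ℝ := c1 ^ (p - 1) with hC'
  have hC'0 : 0 ≤ C' := Real.rpow_nonneg hc10.le _
  -- Lipschitz extension
  obtain ⟨f, hfK, hfeq⟩ := hlip.extend_real
  have hderiv_f : ∀ᵐ t ∂(volume : Measure ℝ), t ∈ Set.Ioo 0 1 → HasDerivAt f (u' t) t := by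
    filter_upwards [hderiv] with t ht hto
    have hnb : Set.Ioo (0:ℝ) 1 ∈ 𝓝 t := isOpen_Ioo.mem_nhds hto
    have heq : f =ᶠ[𝓝 t] u :=
      Filter.eventually_of_mem hnb fun x hx => (hfeq (Set.Ioo_subset_Ioc_self hx)).symm
    exact (ht (Set.Ioo_subset_Ioc_self hto)).congr_of_eventuallyEq heq
  -- sign and bound of the derivative
  have hsign : ∀ᵐ t ∂(volume : Measure ℝ), t ∈ Set.Ioo 0 1 → (u' t ≤ 0 ∧ |u' t| ≤ (K:ℝ)) := by
    filter_upwards [hderiv] with t ht hto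
    have hd := hasDerivAt_iff_tendsto_slope.mp (ht (Set.Ioo_subset_Ioc_self hto))
    have hmem : Set.Ioo (0:ℝ) 1 ∈ 𝓝[≠] t :=
      nhdsWithin_le_nhds (isOpen_Ioo.mem_nhds hto)
    constructor
    · refine le_of_tendsto hd ?_
      filter_upwards [hmem, self_mem_nhdsWithin] with y hy hne
      have hyI : y ∈ Set.Ioc (0:ℝ) 1 := Set.Ioo_subset_Ioc_self hy
      have htI : t ∈ Set.Ioc (0:ℝ) 1 := Set.Ioo_subset_Ioc_self hto
      rw [slope_def_field]
      rcases lt_or_gt_of_ne (hne : y ≠ t) with h | h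
      · have : u t ≤ u y := hmono hyI htI h.le
        exact div_nonpos_of_nonneg_of_nonpos (by linarith) (by linarith)
      · have : u y ≤ u t := hmono htI hyI h.le
        exact div_nonpos_of_nonpos_of_nonneg (by linarith) (by linarith)
    · refine le_of_tendsto hd.abs ?_
      filter_upwards [hmem, self_mem_nhdsWithin] with y hy hne
      have hyI : y ∈ Set.Ioc (0:ℝ) 1 := Set.Ioo_subset_Ioc_self hy
      have htI : t ∈ Set.Ioc (0:ℝ) 1 := Set.Ioo_subset_Ioc_self hto
      have hlips := hlip.dist_le_mul y hyI t htI
      rw [Real.dist_eq, Real.dist_eq] at hlips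
      rw [slope_def_field, abs_div]
      rw [div_le_iff₀ (abs_pos.mpr (sub_ne_zero.mpr (hne : y ≠ t)))]
      exact hlips
  -- measurability of u' and |u'|
  have hmeas1 : AEStronglyMeasurable u' (volume.restrict (Set.Ioc 0 1)) :=
    (ftc_lip hfK zero_le_one hderiv_f).2
  have hne1 : ∀ᵐ x ∂(volume : Measure ℝ), x ≠ 1 := by
    have h0 : {x : ℝ | ¬ x ≠ 1} = {1} := by ext x; simp
    rw [ae_iff, h0]; exact measure_singleton 1
  have habs : ∀ᵐ t ∂(volume.restrict (Set.Ioc (0:ℝ) 1)), |u' t| = -u' t ∧ |u' t| ≤ (K:ℝ) := by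
    filter_upwards [ae_restrict_mem measurableSet_Ioc, ae_restrict_of_ae hsign,
      ae_restrict_of_ae hne1] with t ht hs h1
    have hto : t ∈ Set.Ioo (0:ℝ) 1 := ⟨ht.1, lt_of_le_of_ne ht.2 h1⟩
    exact ⟨abs_of_nonpos (hs hto).1, (hs hto).2⟩
  have habs' : ∀ z : ℝ, 0 ≤ z → ∀ᵐ t ∂(volume.restrict (Set.Ioc z 1)),
      |u' t| = -u' t ∧ |u' t| ≤ (K:ℝ) := fun z hz =>
    ae_restrict_of_ae_restrict_of_subset (Set.Ioc_subset_Ioc_left hz) habs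
  have hmeas_abs : AEStronglyMeasurable (fun t => |u' t|) (volume.restrict (Set.Ioc (0:ℝ) 1)) := by
    refine hmeas1.neg.congr ?_
    filter_upwards [habs] with t ht using (ht.1).symm
  -- FTC
  have hu_eq : ∀ ρ ∈ Set.Ioc (0:ℝ) 1, u ρ = ∫ t in Set.Ioc ρ 1, |u' t| := by
    intro ρ hρ
    have h2 : ∀ᵐ t ∂(volume : Measure ℝ), t ∈ Set.Ioo ρ 1 → HasDerivAt f (u' t) t := by
      filter_upwards [hderiv_f] with t h ht
      exact h ⟨hρ.1.trans ht.1, ht.2⟩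
    have h3 := (ftc_lip hfK hρ.2 h2).1
    have hf1 : f 1 = 0 := by rw [← hfeq (Set.right_mem_Ioc.mpr one_pos), hu1]
    have hfρ : f ρ = u ρ := (hfeq hρ).symm
    have h4 : ∫ t in Set.Ioc ρ 1, |u' t| = ∫ t in Set.Ioc ρ 1, -u' t :=
      integral_congr_ae ((habs' ρ hρ.1.le).mono fun t ht => ht.1)
    rw [h4, integral_neg]
    rw [hf1, hfρ] at h3
    linarith
  -- integrability of |u'|
  have int_abs : ∀ z : ℝ, 0 ≤ z → IntegrableOn (fun t => |u' t|) (Set.Ioc z 1) := by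
    intro z hz
    refine Integrable.mono' (integrable_const (K:ℝ))
      (hmeas_abs.mono_measure (Measure.restrict_mono (Set.Ioc_subset_Ioc_left hz) le_rfl)) ?_
    filter_upwards [habs' z hz] with t ht
    rw [Real.norm_eq_abs, abs_abs]
    exact ht.2
  -- bound for u
  have hu_bd : ∀ ρ ∈ Set.Ioc (0:ℝ) 1, u ρ ≤ (K:ℝ) := by
    intro ρ hρ
    rw [hu_eq ρ hρ]
    calc ∫ t in Set.Ioc ρ 1, |u' t| ≤ ∫ _t in Set.Ioc ρ 1, (K:ℝ) := by
          refine integral_mono_ae (int_abs ρ hρ.1.le) (integrable_const _) ?_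
          filter_upwards [habs' ρ hρ.1.le] with t ht using ht.2
      _ = (K:ℝ) * (volume (Set.Ioc ρ 1)).toReal := by
          rw [setIntegral_const, smul_eq_mul, mul_comm, measureReal_def]
      _ ≤ (K:ℝ) * 1 := by
          refine mul_le_mul_of_nonneg_left ?_ K.coe_nonneg
          rw [Real.volume_Ioc]
          rcases le_or_gt (1 - ρ) 0 with h | h
          · simp [ENNReal.ofReal_of_nonpos h]
          · rw [ENNReal.toReal_ofReal h.le]; linarith [hρ.1]
      _ = (K:ℝ) := mul_one _
  -- rpow helpers
  have hrpow_contOn : ∀ (e z : ℝ), 0 < z → ContinuousOn (fun t : ℝ => t ^ e) (Set.Ioc z 1) := by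
    intro e z hz
    intro t ht
    exact (Real.continuousAt_rpow_const t e (Or.inl (ne_of_gt (hz.trans ht.1)))).continuousWithinAt
  have hrpow_bd : ∀ (e z t : ℝ), 0 < z → t ∈ Set.Ioc z 1 → t ^ e ≤ z ^ e + 1 := by
    intro e z t hz ht
    rcases le_or_gt 0 e with he | he
    · have h1 : t ^ e ≤ 1 := Real.rpow_le_one (hz.trans ht.1).le ht.2 he
      have h2 : (0:ℝ) ≤ z ^ e := Real.rpow_nonneg hz.le e
      linarith
    · have h1 : t ^ e ≤ z ^ e := Real.rpow_le_rpow_of_nonpos hz ht.1.le he.le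
      linarith
  have hrpow_pos : ∀ (e t : ℝ), 0 < t → 0 < t ^ e := fun e t ht => Real.rpow_pos_of_pos ht e
  -- the central integrands
  set h1f : ℝ → ℝ := fun t => |u' t| ^ p * t ^ (n - 1) with hh1
  set h2f : ℝ → ℝ := fun t => |u' t| ^ p * t ^ (n * (p - 1) / p) with hh2
  set I : ℝ → ℝ := fun z => ∫ t in Set.Ioc z 1, h1f t with hIdef
  set J : ℝ → ℝ := fun z => ∫ t in Set.Ioc z 1, h2f t with hJdef
  set g : ℝ → ℝ := fun ρ => u ρ ^ p * ρ ^ (n - p - 1) with hgdef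
  set Fz : ℝ → ℝ := fun z => ∫ ρ in Set.Ioc z 1, g ρ with hFzdef
  have he2 : 0 < n * (p - 1) / p := by positivity
  -- nonnegativity of integrands
  have h1f_nn : ∀ t : ℝ, 0 < t → 0 ≤ h1f t := fun t ht =>
    mul_nonneg (Real.rpow_nonneg (abs_nonneg _) _) (Real.rpow_nonneg ht.le _)
  have h2f_nn : ∀ t : ℝ, 0 < t → 0 ≤ h2f t := fun t ht =>
    mul_nonneg (Real.rpow_nonneg (abs_nonneg _) _) (Real.rpow_nonneg ht.le _)
  have g_nn : ∀ ρ ∈ Set.Ioc (0:ℝ) 1, 0 ≤ g ρ := fun ρ hρ =>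
    mul_nonneg (Real.rpow_nonneg (hnonneg ρ hρ) _) (Real.rpow_nonneg hρ.1.le _)
  -- bound on h2f
  have h2f_bd : ∀ᵐ t ∂(volume.restrict (Set.Ioc (0:ℝ) 1)), h2f t ≤ (K:ℝ) ^ p := by
    filter_upwards [habs, ae_restrict_mem measurableSet_Ioc] with t ht htm
    calc h2f t ≤ (K:ℝ) ^ p * 1 := by
          refine mul_le_mul ?_ ?_ (Real.rpow_nonneg htm.1.le _) (Real.rpow_nonneg K.coe_nonneg _)
          · exact Real.rpow_le_rpow (abs_nonneg _) ht.2 hp0.le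
          · exact Real.rpow_le_one htm.1.le htm.2 he2.le
      _ = (K:ℝ) ^ p := mul_one _
  -- integrability
  have int_h1 : ∀ z : ℝ, 0 ≤ z → IntegrableOn h1f (Set.Ioc z 1) :=
    fun z hz => hint.mono_set (Set.Ioc_subset_Ioc_left hz)
  have meas_h2 : AEStronglyMeasurable h2f (volume.restrict (Set.Ioc (0:ℝ) 1)) := by
    have habs_p : AEStronglyMeasurable (fun t => |u' t| ^ p) (volume.restrict (Set.Ioc (0:ℝ) 1)) := by
      have hcontp : Continuous fun y : ℝ => y ^ p := by
        rw [continuous_iff_continuousAt]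
        exact fun y => Real.continuousAt_rpow_const y p (Or.inr hp0.le)
      exact hcontp.comp_aestronglyMeasurable hmeas_abs
    have hcont2 : Continuous fun t : ℝ => t ^ (n * (p - 1) / p) := by
      rw [continuous_iff_continuousAt]
      exact fun y => Real.continuousAt_rpow_const y _ (Or.inr he2.le)
    exact habs_p.mul hcont2.aestronglyMeasurable.restrict
  have int_h2 : ∀ z : ℝ, 0 < z → IntegrableOn h2f (Set.Ioc z 1) := by
    intro z hz
    refine Integrable.mono' (integrable_const ((K:ℝ) ^ p))
      (meas_h2.mono_measure (Measure.restrict_mono (Set.Ioc_subset_Ioc_left hz.le) le_rfl)) ?_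
    filter_upwards [ae_restrict_of_ae_restrict_of_subset (Set.Ioc_subset_Ioc_left hz.le) h2f_bd,
      ae_restrict_mem measurableSet_Ioc] with t ht htm
    rw [Real.norm_eq_abs, abs_of_nonneg (h2f_nn t (hz.trans htm.1))]
    exact ht
  have int_g : ∀ z : ℝ, 0 < z → IntegrableOn g (Set.Ioc z 1) := by
    intro z hz
    have hcg : ContinuousOn g (Set.Ioc z 1) := by
      have hsub : Set.Ioc z 1 ⊆ Set.Ioc 0 1 := Set.Ioc_subset_Ioc_left hz.le
      have hcu : ContinuousOn u (Set.Ioc z 1) := (hlip.continuousOn).mono hsub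
      refine ContinuousOn.mul ?_ ((hrpow_contOn _ z hz))
      exact hcu.rpow_const fun x hx => Or.inr hp0.le
    refine Integrable.mono' (integrable_const ((K:ℝ) ^ p * (z ^ (n - p - 1) + 1)))
      (hcg.aestronglyMeasurable measurableSet_Ioc) ?_
    filter_upwards [ae_restrict_mem measurableSet_Ioc] with ρ hρ
    have hρ' : ρ ∈ Set.Ioc (0:ℝ) 1 := Set.Ioc_subset_Ioc_left hz.le hρ
    rw [Real.norm_eq_abs, abs_of_nonneg (g_nn ρ hρ')]
    refine mul_le_mul ?_ (hrpow_bd _ z ρ hz hρ) (Real.rpow_nonneg hρ'.1.le _) ?_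
    · exact Real.rpow_le_rpow (hnonneg ρ hρ') (hu_bd ρ hρ') hp0.le
    · exact Real.rpow_nonneg K.coe_nonneg _
  -- the basic power integral
  have hcore : ∀ r s : ℝ, 0 < r → r ≤ s →
      ∫ t in Set.Ioc r s, t ^ (-(n / p)) = (r ^ (-α) - s ^ (-α)) / α := by
    intro r s hr hrs
    rw [← intervalIntegral.integral_of_le hrs]
    have hne : -(n / p) ≠ -1 := by
      intro hcon
      have h5 : n / p = 1 := by linarith [neg_eq_iff_eq_neg.mp hcon]
      have h6 : n = p := by field_simp at h5; linarith
      linarith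
    have hnm : (0:ℝ) ∉ Set.uIcc r s := by
      rw [Set.uIcc_of_le hrs]
      exact fun hc => absurd hc.1 (not_le.mpr hr)
    rw [integral_rpow (Or.inr ⟨hne, hnm⟩)]
    have hexp : -(n / p) + 1 = -α := by rw [hα]; field_simp; ring
    rw [hexp]
    rw [show (s ^ (-α) - r ^ (-α)) / (-α) = (r ^ (-α) - s ^ (-α)) / α by
      rw [div_neg, ← neg_div, neg_sub]]
  have hfin : ∀ z : ℝ, IsFiniteMeasure (volume.restrict (Set.Ioc z 1)) := fun z =>
    ⟨by rw [Measure.restrict_apply_univ]; exact measure_Ioc_lt_top⟩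
  -- the pointwise Hoelder estimate
  have hstar : ∀ z ∈ Set.Ioc (0:ℝ) 1, g z ≤ C' * (z ^ (α - 1) * J z) := by
    intro z hz
    haveI := hfin z
    set β : ℝ := n * (p - 1) / p ^ 2 with hβ
    have hβ0 : 0 < β := by positivity
    set q : ℝ := Real.conjExponent p with hq
    have hpq : p.HolderConjugate q := Real.HolderConjugate.conjExponent hp
    have hq_eq : q = p / (p - 1) := (Real.holderConjugate_iff_eq_conjExponent hp).1 hpq
    have hJ0 : 0 ≤ J z := setIntegral_nonneg measurableSet_Ioc fun t ht => h2f_nn t (hz.1.trans ht.1)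
    have hmem := ae_restrict_mem (μ := volume) (s := Set.Ioc z 1) measurableSet_Ioc
    have hf1nn : 0 ≤ᵐ[volume.restrict (Set.Ioc z 1)] fun t => |u' t| * t ^ β := by
      filter_upwards [hmem] with t ht
      exact mul_nonneg (abs_nonneg _) (Real.rpow_nonneg (hz.1.trans ht.1).le _)
    have hg1nn : 0 ≤ᵐ[volume.restrict (Set.Ioc z 1)] fun t : ℝ => t ^ (-β) := by
      filter_upwards [hmem] with t ht
      exact Real.rpow_nonneg (hz.1.trans ht.1).le _
    have hmeasf1 : AEStronglyMeasurable (fun t => |u' t| * t ^ β)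
        (volume.restrict (Set.Ioc z 1)) := by
      have hcont : Continuous fun t : ℝ => t ^ β := by
        rw [continuous_iff_continuousAt]
        exact fun y => Real.continuousAt_rpow_const y _ (Or.inr hβ0.le)
      exact ((hmeas_abs.mono_measure (Measure.restrict_mono
        (Set.Ioc_subset_Ioc_left hz.1.le) le_rfl)).mul hcont.aestronglyMeasurable.restrict)
    have hmem1 : MemLp (fun t => |u' t| * t ^ β) (ENNReal.ofReal p)
        (volume.restrict (Set.Ioc z 1)) := by
      refine MemLp.of_bound hmeasf1 (K:ℝ) ?_
      filter_upwards [habs' z hz.1.le, hmem] with t ht htm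
      have ht0 : (0:ℝ) < t := hz.1.trans htm.1
      rw [Real.norm_eq_abs, abs_mul, abs_abs, abs_of_nonneg (Real.rpow_nonneg ht0.le _)]
      calc |u' t| * t ^ β ≤ (K:ℝ) * 1 :=
            mul_le_mul ht.2 (Real.rpow_le_one ht0.le htm.2 hβ0.le)
              (Real.rpow_nonneg ht0.le _) K.coe_nonneg
        _ = (K:ℝ) := mul_one _
    have hmem2 : MemLp (fun t : ℝ => t ^ (-β)) (ENNReal.ofReal q)
        (volume.restrict (Set.Ioc z 1)) := by
      refine MemLp.of_bound
        ((hrpow_contOn (-β) z hz.1).aestronglyMeasurable measurableSet_Ioc) (z ^ (-β)) ?_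
      filter_upwards [hmem] with t ht
      rw [Real.norm_eq_abs, abs_of_nonneg (Real.rpow_nonneg (hz.1.trans ht.1).le _)]
      exact Real.rpow_le_rpow_of_nonpos hz.1 ht.1.le (neg_nonpos.mpr hβ0.le)
    have hhold := integral_mul_le_Lp_mul_Lq_of_nonneg hpq hf1nn hg1nn hmem1 hmem2
    have hL : ∫ t in Set.Ioc z 1, (|u' t| * t ^ β) * t ^ (-β) = u z := by
      rw [hu_eq z hz]
      refine integral_congr_ae ?_
      filter_upwards [hmem] with t ht
      have ht0 : (0:ℝ) < t := hz.1.trans ht.1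
      rw [mul_assoc, ← Real.rpow_add ht0, add_neg_cancel, Real.rpow_zero, mul_one]
    have hR1 : ∫ t in Set.Ioc z 1, (|u' t| * t ^ β) ^ p = J z := by
      refine integral_congr_ae ?_
      filter_upwards [hmem] with t ht
      have ht0 : (0:ℝ) < t := hz.1.trans ht.1
      rw [Real.mul_rpow (abs_nonneg _) (Real.rpow_nonneg ht0.le _), ← Real.rpow_mul ht0.le,
        show β * p = n * (p - 1) / p from by rw [hβ]; field_simp]
    have hβq : -β * q = -(n / p) := by
      rw [hβ, hq_eq]; field_simp
    have hR2 : ∫ t in Set.Ioc z 1, (t ^ (-β)) ^ q = (z ^ (-α) - 1) / α := by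
      have h7 : ∫ t in Set.Ioc z 1, (t ^ (-β)) ^ q = ∫ t in Set.Ioc z 1, t ^ (-(n / p)) := by
        refine integral_congr_ae ?_
        filter_upwards [hmem] with t ht
        have ht0 : (0:ℝ) < t := hz.1.trans ht.1
        rw [← Real.rpow_mul ht0.le, hβq]
      rw [h7, hcore z 1 hz.1 hz.2, Real.one_rpow]
    have hQ0 : 0 ≤ ∫ t in Set.Ioc z 1, (t ^ (-β)) ^ q := by
      refine setIntegral_nonneg measurableSet_Ioc fun t ht => ?_
      exact Real.rpow_nonneg (Real.rpow_nonneg (hz.1.trans ht.1).le _) _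
    have hQle : ∫ t in Set.Ioc z 1, (t ^ (-β)) ^ q ≤ c1 * z ^ (-α) := by
      rw [hR2, hc1α]
      calc (z ^ (-α) - 1) / α ≤ z ^ (-α) / α := by
            apply (div_le_div_iff_of_pos_right hα0).mpr; linarith
        _ = α⁻¹ * z ^ (-α) := by rw [div_eq_mul_inv, mul_comm]
    have hX0 : (0:ℝ) ≤ c1 * z ^ (-α) := mul_nonneg hc10.le (Real.rpow_nonneg hz.1.le _)
    have hu2 : u z ≤ (J z) ^ (1/p) * (c1 * z ^ (-α)) ^ (1/q) := by
      rw [← hL]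
      refine hhold.trans ?_
      rw [hR1]
      exact mul_le_mul_of_nonneg_left
        (Real.rpow_le_rpow hQ0 hQle hpq.symm.one_div_nonneg) (Real.rpow_nonneg hJ0 _)
    have hup : u z ^ p ≤ J z * (C' * z ^ (-α * (p - 1))) := by
      have h8 := Real.rpow_le_rpow (hnonneg z hz) hu2 hp0.le
      refine h8.trans_eq ?_
      rw [Real.mul_rpow (Real.rpow_nonneg hJ0 _) (Real.rpow_nonneg hX0 _),
        ← Real.rpow_mul hJ0, ← Real.rpow_mul hX0,
        show 1/p * p = 1 from by field_simp,
        show 1/q * p = p - 1 from by rw [hq_eq]; field_simp,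
        Real.rpow_one,
        Real.mul_rpow hc10.le (Real.rpow_nonneg hz.1.le _),
        ← Real.rpow_mul hz.1.le, ← hC']
    have hzz : z ^ (-α * (p - 1)) * z ^ (n - p - 1) = z ^ (α - 1) := by
      rw [← Real.rpow_add hz.1]
      congr 1
      rw [hα]; field_simp; ring
    calc g z = u z ^ p * z ^ (n - p - 1) := rfl
      _ ≤ (J z * (C' * z ^ (-α * (p - 1)))) * z ^ (n - p - 1) :=
          mul_le_mul_of_nonneg_right hup (Real.rpow_nonneg hz.1.le _)
      _ = C' * ((z ^ (-α * (p - 1)) * z ^ (n - p - 1)) * J z) := by ring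
      _ = C' * (z ^ (α - 1) * J z) := by rw [hzz]
  -- the Fubini step
  have hkey : ∀ z ∈ Set.Ioo (0:ℝ) 1, Fz z ≤ C' * (c1 * I z) := by
    intro z hz
    haveI := hfin z
    set W : ℝ × ℝ → ℝ :=
      Set.indicator {q : ℝ × ℝ | q.1 < q.2} (fun q => q.1 ^ (α - 1) * h2f q.2) with hW
    have hWmeas : AEStronglyMeasurable W
        ((volume.restrict (Set.Ioc z 1)).prod (volume.restrict (Set.Ioc z 1))) := by
      refine AEStronglyMeasurable.indicator ?_ (measurableSet_lt measurable_fst measurable_snd)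
      refine AEStronglyMeasurable.mul ?_ ?_
      · exact ((hrpow_contOn (α-1) z hz.1).aestronglyMeasurable
          measurableSet_Ioc).comp_quasiMeasurePreserving Measure.quasiMeasurePreserving_fst
      · exact ((meas_h2.mono_measure (Measure.restrict_mono (Set.Ioc_subset_Ioc_left hz.1.le)
          le_rfl))).comp_quasiMeasurePreserving Measure.quasiMeasurePreserving_snd
    have hprodmem : ∀ᵐ q ∂((volume.restrict (Set.Ioc z 1)).prod (volume.restrict (Set.Ioc z 1))),
        q.1 ∈ Set.Ioc z 1 ∧ q.2 ∈ Set.Ioc z 1 := by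
      rw [Measure.prod_restrict]
      filter_upwards [ae_restrict_mem (measurableSet_Ioc.prod measurableSet_Ioc)] with q hq
      exact hq
    have hsnd : ∀ᵐ q ∂((volume.restrict (Set.Ioc z 1)).prod (volume.restrict (Set.Ioc z 1))),
        h2f q.2 ≤ (K:ℝ) ^ p :=
      Measure.quasiMeasurePreserving_snd.ae
        (ae_restrict_of_ae_restrict_of_subset (Set.Ioc_subset_Ioc_left hz.1.le) h2f_bd)
    have hWint : Integrable W
        ((volume.restrict (Set.Ioc z 1)).prod (volume.restrict (Set.Ioc z 1))) := by
      refine Integrable.mono' (integrable_const ((z ^ (α-1) + 1) * (K:ℝ) ^ p)) hWmeas ?_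
      filter_upwards [hprodmem, hsnd] with q hq hq2
      rw [Real.norm_eq_abs, hW]
      rcases le_or_gt q.2 q.1 with hle | hlt
      · rw [Set.indicator_of_notMem (show q ∉ {q : ℝ × ℝ | q.1 < q.2} from not_lt.mpr hle),
          abs_zero]
        have := Real.rpow_nonneg hz.1.le (α - 1)
        have := Real.rpow_nonneg (K.coe_nonneg) p
        nlinarith
      · rw [Set.indicator_of_mem (show q ∈ {q : ℝ × ℝ | q.1 < q.2} from hlt),
          abs_of_nonneg (mul_nonneg (Real.rpow_nonneg (hz.1.trans hq.1.1).le _)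
            (h2f_nn _ (hz.1.trans hq.2.1)))]
        exact mul_le_mul (hrpow_bd _ z _ hz.1 hq.1) hq2 (h2f_nn _ (hz.1.trans hq.2.1))
          (by have := Real.rpow_nonneg hz.1.le (α - 1); linarith)
    have hclaimA : ∀ ρ ∈ Set.Ioc z 1, ∫ t in Set.Ioc z 1, W (ρ, t) = ρ ^ (α - 1) * J ρ := by
      intro ρ hρ
      have hfun : (fun t => W (ρ, t)) = (Set.Ioi ρ).indicator (fun t => ρ ^ (α - 1) * h2f t) := by
        funext t
        rw [hW]
        by_cases hc : ρ < t
        · rw [Set.indicator_of_mem (show ((ρ,t) : ℝ × ℝ) ∈ {q : ℝ × ℝ | q.1 < q.2} from hc),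
            Set.indicator_of_mem (Set.mem_Ioi.mpr hc)]
        · rw [Set.indicator_of_notMem (show ((ρ,t) : ℝ × ℝ) ∉ {q : ℝ × ℝ | q.1 < q.2} from hc),
            Set.indicator_of_notMem (by simpa using hc)]
      rw [hfun, setIntegral_indicator measurableSet_Ioi,
        show Set.Ioc z 1 ∩ Set.Ioi ρ = Set.Ioc ρ 1 from by
          ext x
          simp only [Set.mem_inter_iff, Set.mem_Ioc, Set.mem_Ioi]
          constructor
          · rintro ⟨⟨_, hx1⟩, hx2⟩; exact ⟨hx2, hx1⟩
          · rintro ⟨hx1, hx2⟩; exact ⟨⟨hρ.1.trans hx1, hx2⟩, hx1⟩,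
        integral_const_mul]
    have hclaimB : ∀ t ∈ Set.Ioc z 1, ∫ ρ in Set.Ioc z 1, W (ρ, t) ≤ c1 * h1f t := by
      intro t ht
      have ht0 : (0:ℝ) < t := hz.1.trans ht.1
      have hfun : (fun ρ => W (ρ, t)) = (Set.Iio t).indicator (fun ρ => ρ ^ (α - 1) * h2f t) := by
        funext ρ
        rw [hW]
        by_cases hc : ρ < t
        · rw [Set.indicator_of_mem (show ((ρ,t) : ℝ × ℝ) ∈ {q : ℝ × ℝ | q.1 < q.2} from hc),
            Set.indicator_of_mem (Set.mem_Iio.mpr hc)]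
        · rw [Set.indicator_of_notMem (show ((ρ,t) : ℝ × ℝ) ∉ {q : ℝ × ℝ | q.1 < q.2} from hc),
            Set.indicator_of_notMem (by simpa using hc)]
      rw [hfun, setIntegral_indicator measurableSet_Iio,
        show Set.Ioc z 1 ∩ Set.Iio t = Set.Ioo z t from by
          ext x
          simp only [Set.mem_inter_iff, Set.mem_Ioc, Set.mem_Iio, Set.mem_Ioo]
          constructor
          · rintro ⟨⟨hx1, _⟩, hx2⟩; exact ⟨hx1, hx2⟩
          · rintro ⟨hx1, hx2⟩; exact ⟨⟨hx1, (hx2.trans_le ht.2).le⟩, hx2⟩,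
        ← integral_Ioc_eq_integral_Ioo, integral_mul_const,
        ← intervalIntegral.integral_of_le ht.1.le,
        integral_rpow (Or.inl (by linarith : (-1:ℝ) < α - 1)),
        show α - 1 + 1 = α from by ring]
      calc (t ^ α - z ^ α) / α * h2f t ≤ t ^ α / α * h2f t := by
            refine mul_le_mul_of_nonneg_right ((div_le_div_iff_of_pos_right hα0).mpr ?_) (h2f_nn t ht0)
            linarith [Real.rpow_nonneg hz.1.le α]
        _ = c1 * h1f t := by
            simp only [hh1, hh2]
            have h12 : t ^ α * t ^ (n * (p - 1) / p) = t ^ (n - 1) := by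
              rw [← Real.rpow_add ht0]
              congr 1
              rw [hα]; field_simp; ring
            rw [hc1α, div_eq_mul_inv, ← h12]; ring
    have huncurry : Function.uncurry (fun ρ t => W (ρ, t)) = W := by
      funext q; simp [Function.uncurry]
    have hswap : ∫ ρ in Set.Ioc z 1, (∫ t in Set.Ioc z 1, W (ρ, t)) =
        ∫ t in Set.Ioc z 1, (∫ ρ in Set.Ioc z 1, W (ρ, t)) :=
      integral_integral_swap (by rw [huncurry]; exact hWint)
    have h8a : Fz z ≤ C' * ∫ ρ in Set.Ioc z 1, (∫ t in Set.Ioc z 1, W (ρ, t)) := by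
      rw [← integral_const_mul]
      refine setIntegral_mono_on (int_g z hz.1) (hWint.integral_prod_left.const_mul C')
        measurableSet_Ioc ?_
      intro ρ hρ
      have h13 := hstar ρ (Set.Ioc_subset_Ioc_left hz.1.le hρ)
      rwa [← hclaimA ρ hρ] at h13
    have h8c : ∫ t in Set.Ioc z 1, (∫ ρ in Set.Ioc z 1, W (ρ, t)) ≤ c1 * I z := by
      rw [show c1 * I z = ∫ t in Set.Ioc z 1, c1 * h1f t from (integral_const_mul c1 h1f).symm]
      exact setIntegral_mono_on hWint.integral_prod_right
        ((int_h1 z hz.1.le).const_mul c1) measurableSet_Ioc hclaimB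
    calc Fz z ≤ C' * ∫ ρ in Set.Ioc z 1, (∫ t in Set.Ioc z 1, W (ρ, t)) := h8a
      _ = C' * ∫ t in Set.Ioc z 1, (∫ ρ in Set.Ioc z 1, W (ρ, t)) := by rw [hswap]
      _ ≤ C' * (c1 * I z) := mul_le_mul_of_nonneg_left h8c hC'0
  -- properties of I and the integrand of v
  have hI_nn : ∀ z : ℝ, 0 ≤ z → 0 ≤ I z := fun z hz =>
    setIntegral_nonneg measurableSet_Ioc fun t ht => h1f_nn t (hz.trans_lt ht.1)
  have hI_anti : AntitoneOn I (Set.Ici (0:ℝ)) := by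
    intro x hx y hy hxy
    refine setIntegral_mono_set (int_h1 x hx) ?_
      (Set.Ioc_subset_Ioc_left hxy).eventuallyLE
    filter_upwards [ae_restrict_mem measurableSet_Ioc] with t ht
    exact h1f_nn t ((Set.mem_Ici.mp hx).trans_lt ht.1)
  have hI_le : ∀ z : ℝ, 0 ≤ z → I z ≤ I 0 := fun z hz =>
    hI_anti (Set.mem_Ici.mpr le_rfl) (Set.mem_Ici.mpr hz) hz
  have intpow : ∀ r : ℝ, 0 < r → IntegrableOn (fun z : ℝ => z ^ (-(n/p))) (Set.Ioc r 1) := by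
    intro r hr
    haveI := hfin r
    refine Integrable.mono' (integrable_const (r ^ (-(n/p))))
      ((hrpow_contOn _ r hr).aestronglyMeasurable measurableSet_Ioc) ?_
    filter_upwards [ae_restrict_mem measurableSet_Ioc] with z hzm
    rw [Real.norm_eq_abs, abs_of_nonneg (Real.rpow_nonneg (hr.trans hzm.1).le _)]
    exact Real.rpow_le_rpow_of_nonpos hr hzm.1.le (neg_nonpos.mpr (div_nonneg hn0.le hp0.le))
  have hvint : ∀ r : ℝ, 0 < r → IntegrableOn (fun z => z ^ (-(n/p)) * I z) (Set.Ioc r 1) := by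
    intro r hr
    haveI := hfin r
    have hcI : AEMeasurable I (volume.restrict (Set.Ioc r 1)) :=
      aemeasurable_restrict_of_antitoneOn measurableSet_Ioc
        (hI_anti.mono fun x hx => (hr.trans hx.1).le)
    refine Integrable.mono' (integrable_const ((r ^ (-(n/p))) * I 0))
      (((hrpow_contOn _ r hr).aestronglyMeasurable measurableSet_Ioc).mul
        hcI.aestronglyMeasurable) ?_
    filter_upwards [ae_restrict_mem measurableSet_Ioc] with z hzm
    have hz0 : (0:ℝ) < z := hr.trans hzm.1
    rw [Real.norm_eq_abs,
      abs_of_nonneg (mul_nonneg (Real.rpow_nonneg hz0.le _) (hI_nn z hz0.le))]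
    exact mul_le_mul
      (Real.rpow_le_rpow_of_nonpos hr hzm.1.le (neg_nonpos.mpr (div_nonneg hn0.le hp0.le)))
      (hI_le z hz0.le) (hI_nn z hz0.le) (Real.rpow_nonneg hr.le _)
  have hv' : ∀ r, v r = ∫ z in Set.Ioc r 1, z ^ (-(n/p)) * I z := fun r => hv r
  -- bound on the elements of the sup
  have helt : ∀ r ∈ Set.Ioo (0:ℝ) 1, r ^ α * v r ≤ c1 * I 0 := by
    intro r hr
    have h1 : v r ≤ (c1 * r ^ (-α)) * I 0 := by
      rw [hv' r]
      calc ∫ z in Set.Ioc r 1, z ^ (-(n/p)) * I z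
          ≤ ∫ z in Set.Ioc r 1, z ^ (-(n/p)) * I 0 := by
            refine setIntegral_mono_on (hvint r hr.1) ((intpow r hr.1).mul_const (I 0))
              measurableSet_Ioc fun z hzm => ?_
            exact mul_le_mul_of_nonneg_left (hI_le z (hr.1.trans hzm.1).le)
              (Real.rpow_nonneg (hr.1.trans hzm.1).le _)
        _ = (∫ z in Set.Ioc r 1, z ^ (-(n/p))) * I 0 := integral_mul_const _ _
        _ ≤ (c1 * r ^ (-α)) * I 0 := by
            refine mul_le_mul_of_nonneg_right ?_ (hI_nn 0 le_rfl)
            rw [hcore r 1 hr.1 hr.2.le, Real.one_rpow, hc1α]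
            calc (r ^ (-α) - 1) / α ≤ r ^ (-α) / α := (div_le_div_iff_of_pos_right hα0).mpr (by linarith)
              _ = α⁻¹ * r ^ (-α) := by rw [div_eq_mul_inv, mul_comm]
    calc r ^ α * v r ≤ r ^ α * ((c1 * r ^ (-α)) * I 0) :=
          mul_le_mul_of_nonneg_left h1 (Real.rpow_nonneg hr.1.le _)
      _ = c1 * ((r ^ α * r ^ (-α)) * I 0) := by ring
      _ = c1 * I 0 := by rw [← Real.rpow_add hr.1, add_neg_cancel, Real.rpow_zero, one_mul]
  set S := sSup ((fun r => r ^ α * v r) '' Set.Ioo 0 1) with hS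
  have hbddS : BddAbove ((fun r => r ^ α * v r) '' Set.Ioo 0 1) := by
    refine ⟨c1 * I 0, ?_⟩
    rintro x ⟨r, hr, rfl⟩
    exact helt r hr
  have hleS : ∀ r ∈ Set.Ioo (0:ℝ) 1, r ^ α * v r ≤ S := fun r hr =>
    le_csSup hbddS ⟨r, hr, rfl⟩
  have hv_nn : ∀ r : ℝ, 0 < r → 0 ≤ v r := by
    intro r hr
    rw [hv' r]
    refine setIntegral_nonneg measurableSet_Ioc fun z hzm => ?_
    exact mul_nonneg (Real.rpow_nonneg (hr.trans hzm.1).le _) (hI_nn z (hr.trans hzm.1).le)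
  have hS0 : 0 ≤ S :=
    le_trans (mul_nonneg (Real.rpow_nonneg (by norm_num : (0:ℝ) ≤ 1/2) α)
      (hv_nn (1/2) (by norm_num))) (hleS (1/2) (by constructor <;> norm_num))
  -- the main estimate for each truncation
  have h10 : ∀ ε ∈ Set.Ioo (0:ℝ) 1, Fz ε ≤ C' * S := by
    intro ε hε
    have hFmono : ∀ z ∈ Set.Ioc (0:ℝ) ε, Fz ε ≤ Fz z := by
      intro z hzm
      refine setIntegral_mono_set (int_g z hzm.1) ?_
        (Set.Ioc_subset_Ioc_left hzm.2).eventuallyLE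
      filter_upwards [ae_restrict_mem measurableSet_Ioc] with ρ hρ
      exact g_nn ρ ⟨hzm.1.trans hρ.1, hρ.2⟩
    have hr_ineq : ∀ r ∈ Set.Ioo (0:ℝ) ε, Fz ε * (1 - r ^ α * ε ^ (-α)) ≤ C' * S := by
      intro r hr
      haveI := hfin r
      have hsub1 : Set.Ioc r ε ⊆ Set.Ioc r 1 := Set.Ioc_subset_Ioc_right hε.2.le
      have hiA : Fz ε * ∫ z in Set.Ioc r ε, z ^ (-(n/p))
          ≤ (C' * c1) * ∫ z in Set.Ioc r ε, z ^ (-(n/p)) * I z := by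
        rw [← integral_const_mul, ← integral_const_mul]
        refine setIntegral_mono_on (((intpow r hr.1).mono_set hsub1).const_mul _)
          (((hvint r hr.1).mono_set hsub1).const_mul _) measurableSet_Ioc fun z hzm => ?_
        have hz0 : (0:ℝ) < z := hr.1.trans hzm.1
        have hzIoo : z ∈ Set.Ioo (0:ℝ) 1 := ⟨hz0, lt_of_le_of_lt hzm.2 hε.2⟩
        have h15 : Fz ε ≤ (C' * c1) * I z := by
          have h14 := (hFmono z ⟨hz0, hzm.2⟩).trans (hkey z hzIoo)
          linarith [h14, mul_assoc C' c1 (I z)]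
        calc Fz ε * z ^ (-(n/p)) ≤ ((C' * c1) * I z) * z ^ (-(n/p)) :=
              mul_le_mul_of_nonneg_right h15 (Real.rpow_nonneg hz0.le _)
          _ = (C' * c1) * (z ^ (-(n/p)) * I z) := by ring
      have hiB : ∫ z in Set.Ioc r ε, z ^ (-(n/p)) * I z ≤ v r := by
        rw [hv' r]
        refine setIntegral_mono_set (hvint r hr.1) ?_ hsub1.eventuallyLE
        filter_upwards [ae_restrict_mem measurableSet_Ioc] with z hzm
        exact mul_nonneg (Real.rpow_nonneg (hr.1.trans hzm.1).le _)
          (hI_nn z (hr.1.trans hzm.1).le)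
      have hiC : Fz ε * ((r ^ (-α) - ε ^ (-α)) / α) ≤ (C' * c1) * v r := by
        rw [← hcore r ε hr.1 hr.2.le]
        exact hiA.trans (mul_le_mul_of_nonneg_left hiB (mul_nonneg hC'0 hc10.le))
      have hiD := mul_le_mul_of_nonneg_left hiC (Real.rpow_nonneg hr.1.le α)
      have h16 : r ^ α * r ^ (-α) = 1 := by
        rw [← Real.rpow_add hr.1, add_neg_cancel, Real.rpow_zero]
      have hL2 : r ^ α * (Fz ε * ((r ^ (-α) - ε ^ (-α)) / α))
          = (Fz ε * (1 - r ^ α * ε ^ (-α))) * c1 := by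
        rw [hc1α, div_eq_mul_inv]
        calc r ^ α * (Fz ε * ((r ^ (-α) - ε ^ (-α)) * α⁻¹))
            = Fz ε * ((r ^ α * r ^ (-α) - r ^ α * ε ^ (-α)) * α⁻¹) := by ring
          _ = (Fz ε * (1 - r ^ α * ε ^ (-α))) * α⁻¹ := by rw [h16]; ring
      have hR2' : r ^ α * ((C' * c1) * v r) = (C' * (r ^ α * v r)) * c1 := by ring
      rw [hL2, hR2'] at hiD
      have hiF : Fz ε * (1 - r ^ α * ε ^ (-α)) ≤ C' * (r ^ α * v r) :=
        le_of_mul_le_mul_right hiD hc10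
      exact hiF.trans (mul_le_mul_of_nonneg_left (hleS r ⟨hr.1, hr.2.trans hε.2⟩) hC'0)
    have h17 : Tendsto (fun r : ℝ => r ^ α) (𝓝 0) (𝓝 0) := by
      have h18 := (Real.continuousAt_rpow_const 0 α (Or.inr hα0.le)).tendsto
      rwa [Real.zero_rpow hα0.ne'] at h18
    have hcont0 : Tendsto (fun r : ℝ => Fz ε * (1 - r ^ α * ε ^ (-α))) (𝓝[>] (0:ℝ))
        (𝓝 (Fz ε)) := by
      have h18 : Tendsto (fun r : ℝ => Fz ε * (1 - r ^ α * ε ^ (-α))) (𝓝 0)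
          (𝓝 (Fz ε * (1 - 0 * ε ^ (-α)))) :=
        tendsto_const_nhds.mul (tendsto_const_nhds.sub (h17.mul tendsto_const_nhds))
      rw [show Fz ε * (1 - 0 * ε ^ (-α)) = Fz ε from by ring] at h18
      exact h18.mono_left nhdsWithin_le_nhds
    refine le_of_tendsto hcont0 ?_
    filter_upwards [Ioo_mem_nhdsGT_of_mem (show (0:ℝ) ∈ Set.Ico (0:ℝ) ε from ⟨le_rfl, hε.1⟩)]
      with r hr
    exact hr_ineq r hr
  -- conclusion
  rcases em (IntegrableOn g (Set.Ioc 0 1)) with hgint | hgint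
  · have hsets_mono : Monotone (fun k : ℕ => Set.Ioc (((k:ℝ)+2)⁻¹) 1) := by
      intro a b hab
      apply Set.Ioc_subset_Ioc_left
      apply inv_anti₀ (by positivity)
      have : (a:ℝ) ≤ (b:ℝ) := Nat.cast_le.mpr hab
      linarith
    have hUnion : ⋃ k : ℕ, Set.Ioc (((k:ℝ)+2)⁻¹) 1 = Set.Ioc (0:ℝ) 1 := by
      ext x
      simp only [Set.mem_iUnion, Set.mem_Ioc]
      constructor
      · rintro ⟨k, hk1, hk2⟩
        exact ⟨lt_trans (by positivity) hk1, hk2⟩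
      · rintro ⟨hx1, hx2⟩
        obtain ⟨k, hk⟩ := exists_nat_gt x⁻¹
        refine ⟨k, ?_, hx2⟩
        have h19 : x⁻¹ < (k:ℝ) + 2 := by linarith
        have h20 := inv_strictAnti₀ (inv_pos.mpr hx1) h19
        rwa [inv_inv] at h20
    have hT := tendsto_setIntegral_of_monotone (fun _ => measurableSet_Ioc) hsets_mono
      (by rw [hUnion]; exact hgint)
    rw [hUnion] at hT
    refine le_of_tendsto hT (Eventually.of_forall fun k => ?_)
    refine h10 _ ⟨by positivity, ?_⟩
    rw [inv_lt_one_iff₀]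
    right
    have : (0:ℝ) ≤ (k:ℝ) := Nat.cast_nonneg k
    linarith
  · rw [integral_undef hgint]
    exact mul_nonneg hC'0 hS0
end
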